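/- Let ∂ be the covariant exterior derivative on Weyl-bundle-valued forms induced by a symplectic connection ∇ with Christoffel symbols Γ, given by ∂a = da − (1/ν)[Γ̄, a] with Γ̄ = (1/2) ω_{ki} Γ^k_{rj} y^i y^j dx^r. Then for any smooth vector field X, the anticommutator satisfies ∂ ∘ i(X) + i(X) ∘ ∂ = L_X − (∇_i X)^j y^i ∂_{y^j}, a Cartan-type formula for the Weyl bundle. -/

import Mathlib

open Finset MvPolynomial

/-! Local-coordinate (polynomial-coefficient) model of the Weyl bundle of a symplectic
manifold: the base coordinates `x¹,…,xᵐ` are the `Sum.inl` variables and the fibre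
coordinates `y¹,…,yᵐ` are the `Sum.inr` variables. -/

/-- A section of the Weyl bundle over the coordinate chart: a series
`Σ ν^k a_k(x,y)` with polynomial coefficients. -/
abbrev WeylSec (m : ℕ) := ℕ → MvPolynomial (Fin m ⊕ Fin m) ℝ

/-- Weyl-bundle valued `q`-forms, in components. -/
abbrev WeylSecForm (m q : ℕ) := (Fin q → Fin m) → WeylSec m

/-- A Weyl-valued form is alternating. -/
def IsAltSecForm {m q : ℕ} (a : WeylSecForm m q) : Prop :=
  ∀ (σ : Equiv.Perm (Fin q)) (v : Fin q → Fin m),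
    a (v ∘ σ) = (Equiv.Perm.sign σ : ℤ) • a v

/-- Functions of the base coordinates only, viewed inside the Weyl bundle. -/
noncomputable def baseP {m : ℕ} (f : MvPolynomial (Fin m) ℝ) :
    MvPolynomial (Fin m ⊕ Fin m) ℝ := rename Sum.inl f

/-- The fibre variable `yⁱ`. -/
noncomputable def yVar {m : ℕ} (i : Fin m) : MvPolynomial (Fin m ⊕ Fin m) ℝ :=
  X (Sum.inr i)

/-- The `t`-fold fibrewise transvectant (`y`-derivatives only). -/
noncomputable def transvY {m : ℕ} (Λ : Fin m → Fin m → ℝ) :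
    ℕ → MvPolynomial (Fin m ⊕ Fin m) ℝ → MvPolynomial (Fin m ⊕ Fin m) ℝ →
      MvPolynomial (Fin m ⊕ Fin m) ℝ
  | 0, f, g => f * g
  | t + 1, f, g => ∑ i : Fin m, ∑ j : Fin m,
      Λ i j • transvY Λ t (pderiv (Sum.inr i) f) (pderiv (Sum.inr j) g)

/-- The fibrewise Moyal product on sections of the Weyl bundle. -/
noncomputable def moyalY {m : ℕ} (Λ : Fin m → Fin m → ℝ) (a b : WeylSec m) :
    WeylSec m :=
  fun n => ∑ t ∈ range (n + 1), ∑ k ∈ range (n - t + 1),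
    ((2 ^ t * (t.factorial : ℝ))⁻¹) • transvY Λ t (a k) (b (n - t - k))

/-- The graded commutator of a Weyl-valued `1`-form with a `q`-form, in components. -/
noncomputable def gradedCommY {m q : ℕ} (Λ : Fin m → Fin m → ℝ)
    (s : WeylSecForm m 1) (a : WeylSecForm m q) : WeylSecForm m (q + 1) :=
  fun v => ∑ t : Fin (q + 1), ((-1 : ℝ) ^ (t : ℕ)) •
    (moyalY Λ (s fun _ => v t) (a (v ∘ t.succAbove))
      - moyalY Λ (a (v ∘ t.succAbove)) (s fun _ => v t))

/-- Division by `ν` (defined on series with vanishing constant term). -/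
def nuDiv {m : ℕ} (a : WeylSec m) : WeylSec m := fun n => a (n + 1)

/-- The exterior derivative in the base variables, `da = dx^k ∧ ∂a/∂x^k`. -/
noncomputable def dBase {m q : ℕ} (a : WeylSecForm m q) : WeylSecForm m (q + 1) :=
  fun v n => ∑ t : Fin (q + 1),
    ((-1 : ℝ) ^ (t : ℕ)) • pderiv (Sum.inl (v t)) (a (v ∘ t.succAbove) n)

/-- `Γ̄ = ½ ω_{ki} Γ^k_{rj} yⁱ yʲ dx^r`, built from the Christoffel symbols `Γ` of the
symplectic connection (functions of the base variables). -/
noncomputable def gammaBar {m : ℕ} (ω : Fin m → Fin m → ℝ)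
    (Γ : Fin m → Fin m → Fin m → MvPolynomial (Fin m) ℝ) : WeylSecForm m 1 :=
  fun v n =>
    if n = 0 then
      (1 / 2 : ℝ) • ∑ k : Fin m, ∑ i : Fin m, ∑ j : Fin m,
        ω k i • (baseP (Γ k (v 0) j) * yVar i * yVar j)
    else 0

/-- The covariant exterior derivative `∂a = da − (1/ν)[Γ̄, a]` on Weyl-bundle valued
forms. -/
noncomputable def covD {m q : ℕ} (Λ ω : Fin m → Fin m → ℝ)
    (Γ : Fin m → Fin m → Fin m → MvPolynomial (Fin m) ℝ)
    (a : WeylSecForm m q) : WeylSecForm m (q + 1) :=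
  fun v => dBase a v - nuDiv (gradedCommY Λ (gammaBar ω Γ) a v)

/-- Contraction `i(X)` with a vector field `X = X^k ∂/∂x^k` (components `X0 k`,
functions of the base variables). -/
noncomputable def contractX {m q : ℕ} (X0 : Fin m → MvPolynomial (Fin m) ℝ)
    (a : WeylSecForm m (q + 1)) : WeylSecForm m q :=
  fun w n => ∑ k : Fin m, baseP (X0 k) * a (Fin.cons k w) n

/-- The Lie derivative `L_X` on Weyl-bundle valued forms: it acts as the Lie derivative
on the (covariant) tensor coefficients — both the symmetric `y`-indices and the
antisymmetric form indices — together with `X^k ∂/∂x^k` on the base. -/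
noncomputable def lieDer {m q : ℕ} (X0 : Fin m → MvPolynomial (Fin m) ℝ)
    (a : WeylSecForm m q) : WeylSecForm m q :=
  fun v n =>
    (∑ k : Fin m, baseP (X0 k) * pderiv (Sum.inl k) (a v n))
    + (∑ i : Fin m, ∑ j : Fin m,
        baseP (pderiv i (X0 j)) * yVar i * pderiv (Sum.inr j) (a v n))
    + (∑ t : Fin q, ∑ k : Fin m,
        baseP (pderiv (v t) (X0 k)) * a (Function.update v t k) n)


section Aux

lemma pderiv_inr_baseP {m : ℕ} (k : Fin m) (f : MvPolynomial (Fin m) ℝ) :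
    pderiv (Sum.inr k) (baseP f) = 0 := by
  apply pderiv_eq_zero_of_notMem_vars
  intro h
  have := MvPolynomial.vars_rename (R := ℝ) Sum.inl f h
  simp at this

lemma pderiv_inl_baseP {m : ℕ} (k : Fin m) (f : MvPolynomial (Fin m) ℝ) :
    pderiv (Sum.inl k) (baseP f) = baseP (pderiv k f) :=
  pderiv_rename Sum.inl_injective k f
variable {m : ℕ} (Λ : Fin m → Fin m → ℝ)

lemma transvY_zero_left : ∀ t g, transvY Λ t (0 : MvPolynomial (Fin m ⊕ Fin m) ℝ) g = 0 := by
  intro t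
  induction t with
  | zero => intro g; simp [transvY]
  | succ t ih => intro g; simp [transvY, ih]

lemma transvY_zero_right : ∀ t f, transvY Λ t f (0 : MvPolynomial (Fin m ⊕ Fin m) ℝ) = 0 := by
  intro t
  induction t with
  | zero => intro f; simp [transvY]
  | succ t ih => intro f; simp [transvY, ih]

lemma transvY_three_left : ∀ (t : ℕ) (f : MvPolynomial (Fin m ⊕ Fin m) ℝ),
    (∀ a b c : Fin m, pderiv (Sum.inr a) (pderiv (Sum.inr b)
      (pderiv (Sum.inr c) f)) = 0) →
    ∀ g, transvY Λ (t + 3) f g = 0 := by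
  intro t
  induction t with
  | zero =>
      intro f hf g
      simp [transvY, hf]
  | succ t ih =>
      intro f hf g
      show (∑ i : Fin m, ∑ j : Fin m,
        Λ i j • transvY Λ (t + 3) (pderiv (Sum.inr i) f) (pderiv (Sum.inr j) g)) = 0
      apply Finset.sum_eq_zero; intro i _
      apply Finset.sum_eq_zero; intro j _
      rw [ih (pderiv (Sum.inr i) f) (fun a b c => by rw [hf b c i, map_zero]), smul_zero]

lemma transvY_three_right : ∀ (t : ℕ) (g : MvPolynomial (Fin m ⊕ Fin m) ℝ),
    (∀ a b c : Fin m, pderiv (Sum.inr a) (pderiv (Sum.inr b)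
      (pderiv (Sum.inr c) g)) = 0) →
    ∀ f, transvY Λ (t + 3) f g = 0 := by
  intro t
  induction t with
  | zero =>
      intro g hg f
      simp [transvY, hg]
  | succ t ih =>
      intro g hg f
      show (∑ i : Fin m, ∑ j : Fin m,
        Λ i j • transvY Λ (t + 3) (pderiv (Sum.inr i) f) (pderiv (Sum.inr j) g)) = 0
      apply Finset.sum_eq_zero; intro i _
      apply Finset.sum_eq_zero; intro j _
      rw [ih (pderiv (Sum.inr j) g) (fun a b c => by rw [hg b c j, map_zero]), smul_zero]

lemma transvY_one (f g : MvPolynomial (Fin m ⊕ Fin m) ℝ) :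
    transvY Λ 1 f g = ∑ i : Fin m, ∑ j : Fin m,
      Λ i j • (pderiv (Sum.inr i) f * pderiv (Sum.inr j) g) := by
  simp [transvY]

lemma transvY_one_antisymm (hΛ : ∀ i j, Λ i j = - Λ j i)
    (f g : MvPolynomial (Fin m ⊕ Fin m) ℝ) :
    transvY Λ 1 g f = - transvY Λ 1 f g := by
  rw [transvY_one, transvY_one, ← Finset.sum_neg_distrib, Finset.sum_comm]
  apply Finset.sum_congr rfl; intro i _
  rw [← Finset.sum_neg_distrib]
  apply Finset.sum_congr rfl; intro j _
  rw [hΛ j i, neg_smul, mul_comm]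

lemma transvY_two_expand (f g : MvPolynomial (Fin m ⊕ Fin m) ℝ) :
    transvY Λ 2 f g = ∑ i : Fin m, ∑ j : Fin m, ∑ k : Fin m, ∑ l : Fin m,
      (Λ i j * Λ k l) • (pderiv (Sum.inr k) (pderiv (Sum.inr i) f)
        * pderiv (Sum.inr l) (pderiv (Sum.inr j) g)) := by
  simp [transvY, Finset.smul_sum, smul_smul]

lemma transvY_two_comm (hΛ : ∀ i j, Λ i j = - Λ j i)
    (f g : MvPolynomial (Fin m ⊕ Fin m) ℝ) :
    transvY Λ 2 g f = transvY Λ 2 f g := by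
  rw [transvY_two_expand, transvY_two_expand, Finset.sum_comm]
  apply Finset.sum_congr rfl; intro i _
  apply Finset.sum_congr rfl; intro j _
  rw [Finset.sum_comm]
  apply Finset.sum_congr rfl; intro k _
  apply Finset.sum_congr rfl; intro l _
  rw [hΛ j i, hΛ l k, neg_mul_neg,
    mul_comm (pderiv (Sum.inr l) (pderiv (Sum.inr j) g))]

lemma moyal_conc_left (G : MvPolynomial (Fin m ⊕ Fin m) ℝ) (c : WeylSec m) (n : ℕ) :
    moyalY Λ (fun k => if k = 0 then G else 0) c n
      = ∑ t ∈ range (n + 1),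
          ((2 ^ t * (t.factorial : ℝ))⁻¹) • transvY Λ t G (c (n - t)) := by
  unfold moyalY
  apply Finset.sum_congr rfl; intro t _
  rw [Finset.sum_eq_single_of_mem 0 (Finset.mem_range.2 (Nat.succ_pos _))]
  · simp
  · intro k _ hk
    simp [hk, transvY_zero_left]

lemma moyal_conc_right (G : MvPolynomial (Fin m ⊕ Fin m) ℝ) (c : WeylSec m) (n : ℕ) :
    moyalY Λ c (fun k => if k = 0 then G else 0) n
      = ∑ t ∈ range (n + 1),
          ((2 ^ t * (t.factorial : ℝ))⁻¹) • transvY Λ t (c (n - t)) G := by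
  unfold moyalY
  apply Finset.sum_congr rfl; intro t _
  rw [Finset.sum_eq_single_of_mem (n - t) (Finset.mem_range.2 (Nat.lt_succ_self _))]
  · simp
  · intro k hk hkne
    have hklt : k < n - t := lt_of_le_of_ne (Nat.lt_succ_iff.1 (Finset.mem_range.1 hk)) hkne
    have : n - t - k ≠ 0 := Nat.sub_ne_zero_of_lt hklt
    simp [this, transvY_zero_right]

/-- The order-(n+1) component of the Moyal commutator with a section concentrated in
`ν`-degree 0 whose value is at most quadratic in `y`. -/
lemma moyal_comm_conc (hΛskew : ∀ i j, Λ i j = - Λ j i)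
    (G : MvPolynomial (Fin m ⊕ Fin m) ℝ)
    (hG3 : ∀ a b c : Fin m, pderiv (Sum.inr a) (pderiv (Sum.inr b)
      (pderiv (Sum.inr c) G)) = 0)
    (c : WeylSec m) (n : ℕ) :
    moyalY Λ (fun k => if k = 0 then G else 0) c (n + 1)
      - moyalY Λ c (fun k => if k = 0 then G else 0) (n + 1)
      = ∑ i : Fin m, ∑ j : Fin m,
          Λ i j • (pderiv (Sum.inr i) G * pderiv (Sum.inr j) (c n)) := by
  rw [moyal_conc_left, moyal_conc_right, ← Finset.sum_sub_distrib]
  rw [Finset.sum_eq_single_of_mem 1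
    (Finset.mem_range.2 (by omega))]
  · have h1 : n + 1 - 1 = n := rfl
    rw [h1, transvY_one_antisymm Λ hΛskew G (c n), smul_neg, sub_neg_eq_add,
      ← add_smul]
    norm_num
    rw [transvY_one]
  · intro t _ htne
    match t, htne with
    | 0, _ => simp [transvY]; rw [mul_comm]; simp
    | 1, h => exact absurd rfl h
    | 2, _ => rw [transvY_two_comm Λ hΛskew, sub_self]
    | (s+3), _ =>
        rw [transvY_three_left Λ s G hG3, transvY_three_right Λ s G hG3,
          sub_self]

noncomputable def Gq {m : ℕ} (ω : Fin m → Fin m → ℝ)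
    (Γ : Fin m → Fin m → Fin m → MvPolynomial (Fin m) ℝ) (r : Fin m) :
    MvPolynomial (Fin m ⊕ Fin m) ℝ :=
  (1 / 2 : ℝ) • ∑ k : Fin m, ∑ i : Fin m, ∑ j : Fin m,
    ω k i • (baseP (Γ k r j) * yVar i * yVar j)

lemma gammaBar_apply {m : ℕ} (ω : Fin m → Fin m → ℝ)
    (Γ : Fin m → Fin m → Fin m → MvPolynomial (Fin m) ℝ) (r : Fin m) :
    gammaBar ω Γ (fun _ => r) = fun n => if n = 0 then Gq ω Γ r else 0 := rfl

lemma d1_block {m : ℕ} (f : MvPolynomial (Fin m) ℝ) (i j p : Fin m) :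
    pderiv (Sum.inr p) (baseP f * yVar i * yVar j)
      = (if i = p then baseP f * yVar j else 0)
        + (if j = p then baseP f * yVar i else 0) := by
  simp only [yVar, pderiv_mul, pderiv_inr_baseP, pderiv_X, Pi.single_apply]
  split_ifs <;> ring_nf <;> simp_all <;> ring

lemma d3_block {m : ℕ} (f : MvPolynomial (Fin m) ℝ) (i j a b c : Fin m) :
    pderiv (Sum.inr a) (pderiv (Sum.inr b) (pderiv (Sum.inr c)
      (baseP f * yVar i * yVar j))) = 0 := by
  rw [d1_block]
  have h2 : ∀ (g : MvPolynomial (Fin m) ℝ) (i' : Fin m),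
      pderiv (Sum.inr a) (pderiv (Sum.inr b) (baseP g * yVar i')) = 0 := by
    intro g i'
    simp only [yVar, pderiv_mul, pderiv_inr_baseP, pderiv_X, Pi.single_apply,
      zero_mul, zero_add, mul_ite, mul_one, mul_zero]
    split_ifs <;> simp [pderiv_inr_baseP]
  split_ifs <;> simp only [map_add, map_zero, h2, add_zero, zero_add]

lemma Gq_d3 {m : ℕ} (ω : Fin m → Fin m → ℝ)
    (Γ : Fin m → Fin m → Fin m → MvPolynomial (Fin m) ℝ) (r : Fin m) :
    ∀ a b c : Fin m, pderiv (Sum.inr a) (pderiv (Sum.inr b)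
      (pderiv (Sum.inr c) (Gq ω Γ r))) = 0 := by
  intro a b c
  simp only [Gq, Derivation.map_smul, map_sum, d3_block, smul_zero,
    Finset.sum_const_zero]

lemma pderiv_Gq {m : ℕ} (ω : Fin m → Fin m → ℝ)
    (Γ : Fin m → Fin m → Fin m → MvPolynomial (Fin m) ℝ)
    (hsymp : ∀ r i j, ∑ k : Fin m, ω k i • Γ k r j = ∑ k : Fin m, ω k j • Γ k r i)
    (r p : Fin m) :
    pderiv (Sum.inr p) (Gq ω Γ r)
      = ∑ k : Fin m, ∑ j : Fin m, ω k p • (baseP (Γ k r j) * yVar j) := by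
  have hbase : ∀ i : Fin m,
      (∑ k : Fin m, ω k i • baseP (Γ k r p))
        = ∑ k : Fin m, ω k p • baseP (Γ k r i) := by
    intro i
    have h : baseP (∑ k : Fin m, ω k i • Γ k r p)
        = baseP (∑ k : Fin m, ω k p • Γ k r i) := congrArg baseP (hsymp r i p)
    simpa only [baseP, map_sum, map_smul] using h
  have hswap : (∑ k : Fin m, ∑ i : Fin m, ω k i • (baseP (Γ k r p) * yVar i))
      = ∑ k : Fin m, ∑ j : Fin m, ω k p • (baseP (Γ k r j) * yVar j) := by
    rw [Finset.sum_comm]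
    calc (∑ i : Fin m, ∑ k : Fin m, ω k i • (baseP (Γ k r p) * yVar i))
        = ∑ i : Fin m, (∑ k : Fin m, ω k i • baseP (Γ k r p)) * yVar i := by
          apply Finset.sum_congr rfl; intro i _
          rw [Finset.sum_mul]
          apply Finset.sum_congr rfl; intro k _
          rw [smul_mul_assoc]
      _ = ∑ i : Fin m, (∑ k : Fin m, ω k p • baseP (Γ k r i)) * yVar i := by
          apply Finset.sum_congr rfl; intro i _
          rw [hbase i]
      _ = ∑ i : Fin m, ∑ k : Fin m, ω k p • (baseP (Γ k r i) * yVar i) := by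
          apply Finset.sum_congr rfl; intro i _
          rw [Finset.sum_mul]
          apply Finset.sum_congr rfl; intro k _
          rw [smul_mul_assoc]
      _ = ∑ k : Fin m, ∑ j : Fin m, ω k p • (baseP (Γ k r j) * yVar j) :=
          Finset.sum_comm
  unfold Gq
  simp only [Derivation.map_smul, map_sum, d1_block, smul_add,
    Finset.sum_add_distrib, smul_ite, smul_zero, Finset.sum_ite_irrel,
    Finset.sum_const_zero, Finset.sum_ite_eq', Finset.mem_univ, if_true]
  rw [hswap, ← two_smul ℝ, smul_smul]
  norm_num

lemma omega_lambda {m : ℕ} (Λ ω : Fin m → Fin m → ℝ)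
    (hΛskew : ∀ i j, Λ i j = - Λ j i) (hωskew : ∀ i j, ω i j = - ω j i)
    (hωΛ : ∀ i k, ∑ j : Fin m, ω j k * Λ i j = if i = k then 1 else 0)
    (k q : Fin m) :
    ∑ p : Fin m, Λ p q * ω k p = if q = k then 1 else 0 := by
  rw [← hωΛ q k]
  apply Finset.sum_congr rfl; intro p _
  rw [hωskew k p, hΛskew p q]
  ring

lemma transv1G {m : ℕ} (Λ ω : Fin m → Fin m → ℝ)
    (Γ : Fin m → Fin m → Fin m → MvPolynomial (Fin m) ℝ)
    (hΛskew : ∀ i j, Λ i j = - Λ j i) (hωskew : ∀ i j, ω i j = - ω j i)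
    (hωΛ : ∀ i k, ∑ j : Fin m, ω j k * Λ i j = if i = k then 1 else 0)
    (hsymp : ∀ r i j, ∑ k : Fin m, ω k i • Γ k r j = ∑ k : Fin m, ω k j • Γ k r i)
    (r : Fin m) (c' : MvPolynomial (Fin m ⊕ Fin m) ℝ) :
    (∑ p : Fin m, ∑ q : Fin m,
        Λ p q • (pderiv (Sum.inr p) (Gq ω Γ r) * pderiv (Sum.inr q) c'))
      = ∑ k : Fin m, ∑ j : Fin m,
          baseP (Γ k r j) * yVar j * pderiv (Sum.inr k) c' := by
  calc (∑ p : Fin m, ∑ q : Fin m,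
        Λ p q • (pderiv (Sum.inr p) (Gq ω Γ r) * pderiv (Sum.inr q) c'))
      = ∑ p : Fin m, ∑ q : Fin m, ∑ k : Fin m, ∑ j : Fin m,
          (Λ p q * ω k p) • (baseP (Γ k r j) * yVar j * pderiv (Sum.inr q) c') := by
        apply Finset.sum_congr rfl; intro p _
        apply Finset.sum_congr rfl; intro q _
        rw [pderiv_Gq ω Γ hsymp r p, Finset.sum_mul, Finset.smul_sum]
        apply Finset.sum_congr rfl; intro k _
        rw [Finset.sum_mul, Finset.smul_sum]
        apply Finset.sum_congr rfl; intro j _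
        rw [smul_mul_assoc, smul_smul]
    _ = ∑ q : Fin m, ∑ k : Fin m, ∑ j : Fin m, ∑ p : Fin m,
          (Λ p q * ω k p) • (baseP (Γ k r j) * yVar j * pderiv (Sum.inr q) c') := by
        rw [Finset.sum_comm]
        apply Finset.sum_congr rfl; intro q _
        rw [Finset.sum_comm]
        apply Finset.sum_congr rfl; intro k _
        rw [Finset.sum_comm]
    _ = ∑ q : Fin m, ∑ k : Fin m, ∑ j : Fin m,
          (if q = k then (1:ℝ) else 0) •
            (baseP (Γ k r j) * yVar j * pderiv (Sum.inr q) c') := by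
        apply Finset.sum_congr rfl; intro q _
        apply Finset.sum_congr rfl; intro k _
        apply Finset.sum_congr rfl; intro j _
        rw [← Finset.sum_smul, omega_lambda Λ ω hΛskew hωskew hωΛ k q]
    _ = ∑ k : Fin m, ∑ j : Fin m,
          baseP (Γ k r j) * yVar j * pderiv (Sum.inr k) c' := by
        simp only [ite_smul, one_smul, zero_smul, Finset.sum_ite_irrel,
          Finset.sum_const_zero, Finset.sum_ite_eq, Finset.mem_univ, if_true]

lemma nuDiv_comm {m q' : ℕ} (Λ ω : Fin m → Fin m → ℝ)
    (Γ : Fin m → Fin m → Fin m → MvPolynomial (Fin m) ℝ)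
    (hΛskew : ∀ i j, Λ i j = - Λ j i) (hωskew : ∀ i j, ω i j = - ω j i)
    (hωΛ : ∀ i k, ∑ j : Fin m, ω j k * Λ i j = if i = k then 1 else 0)
    (hsymp : ∀ r i j, ∑ k : Fin m, ω k i • Γ k r j = ∑ k : Fin m, ω k j • Γ k r i)
    (b : WeylSecForm m q') (v : Fin (q' + 1) → Fin m) (n : ℕ) :
    nuDiv (gradedCommY Λ (gammaBar ω Γ) b v) n
      = ∑ t : Fin (q' + 1), ((-1:ℝ)^(t:ℕ)) •
          ∑ k : Fin m, ∑ j : Fin m,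
            baseP (Γ k (v t) j) * yVar j
              * pderiv (Sum.inr k) (b (v ∘ t.succAbove) n) := by
  unfold nuDiv gradedCommY
  rw [Finset.sum_apply]
  apply Finset.sum_congr rfl; intro t _
  rw [Pi.smul_apply, Pi.sub_apply, gammaBar_apply ω Γ (v t),
    moyal_comm_conc Λ hΛskew (Gq ω Γ (v t)) (Gq_d3 ω Γ (v t)) _ n]
  congr 1
  exact transv1G Λ ω Γ hΛskew hωskew hωΛ hsymp (v t) _

noncomputable def nabla {m : ℕ}
    (Γ : Fin m → Fin m → Fin m → MvPolynomial (Fin m) ℝ) (r : Fin m)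
    (p : MvPolynomial (Fin m ⊕ Fin m) ℝ) : MvPolynomial (Fin m ⊕ Fin m) ℝ :=
  pderiv (Sum.inl r) p - ∑ k : Fin m, ∑ j : Fin m,
    baseP (Γ k r j) * yVar j * pderiv (Sum.inr k) p

lemma covD_eq {m q' : ℕ} (Λ ω : Fin m → Fin m → ℝ)
    (Γ : Fin m → Fin m → Fin m → MvPolynomial (Fin m) ℝ)
    (hΛskew : ∀ i j, Λ i j = - Λ j i) (hωskew : ∀ i j, ω i j = - ω j i)
    (hωΛ : ∀ i k, ∑ j : Fin m, ω j k * Λ i j = if i = k then 1 else 0)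
    (hsymp : ∀ r i j, ∑ k : Fin m, ω k i • Γ k r j = ∑ k : Fin m, ω k j • Γ k r i)
    (b : WeylSecForm m q') (v : Fin (q' + 1) → Fin m) (n : ℕ) :
    covD Λ ω Γ b v n
      = ∑ t : Fin (q' + 1), ((-1:ℝ)^(t:ℕ)) •
          nabla Γ (v t) (b (v ∘ t.succAbove) n) := by
  show (dBase b v - nuDiv (gradedCommY Λ (gammaBar ω Γ) b v)) n = _
  rw [Pi.sub_apply, nuDiv_comm Λ ω Γ hΛskew hωskew hωΛ hsymp b v n]
  unfold dBase nabla
  rw [← Finset.sum_sub_distrib]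
  apply Finset.sum_congr rfl; intro t _
  rw [← smul_sub]

lemma nabla_sum {m : ℕ} (Γ : Fin m → Fin m → Fin m → MvPolynomial (Fin m) ℝ)
    (r : Fin m) {ι : Type*} (s : Finset ι)
    (f : ι → MvPolynomial (Fin m ⊕ Fin m) ℝ) :
    nabla Γ r (∑ x ∈ s, f x) = ∑ x ∈ s, nabla Γ r (f x) := by
  unfold nabla
  have h : (∑ k : Fin m, ∑ j : Fin m, baseP (Γ k r j) * yVar j
        * pderiv (Sum.inr k) (∑ x ∈ s, f x))
      = ∑ x ∈ s, ∑ k : Fin m, ∑ j : Fin m, baseP (Γ k r j) * yVar j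
        * pderiv (Sum.inr k) (f x) := by
    simp only [map_sum, Finset.mul_sum]
    calc (∑ k : Fin m, ∑ j : Fin m, ∑ x ∈ s, baseP (Γ k r j) * yVar j
          * pderiv (Sum.inr k) (f x))
        = ∑ k : Fin m, ∑ x ∈ s, ∑ j : Fin m, baseP (Γ k r j) * yVar j
          * pderiv (Sum.inr k) (f x) :=
          Finset.sum_congr rfl (fun k _ => Finset.sum_comm)
      _ = _ := Finset.sum_comm
  rw [map_sum, h, Finset.sum_sub_distrib]

lemma nabla_mul_base {m : ℕ} (Γ : Fin m → Fin m → Fin m → MvPolynomial (Fin m) ℝ)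
    (r : Fin m) (f : MvPolynomial (Fin m) ℝ) (p : MvPolynomial (Fin m ⊕ Fin m) ℝ) :
    nabla Γ r (baseP f * p)
      = baseP (pderiv r f) * p + baseP f * nabla Γ r p := by
  unfold nabla
  rw [pderiv_mul, pderiv_inl_baseP]
  have hk : ∀ k : Fin m, pderiv (Sum.inr k) (baseP f * p)
      = baseP f * pderiv (Sum.inr k) p := by
    intro k; rw [pderiv_mul, pderiv_inr_baseP, zero_mul, zero_add]
  simp only [hk]
  have h : (∑ k : Fin m, ∑ j : Fin m, baseP (Γ k r j) * yVar j
        * (baseP f * pderiv (Sum.inr k) p))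
      = baseP f * ∑ k : Fin m, ∑ j : Fin m, baseP (Γ k r j) * yVar j
        * pderiv (Sum.inr k) p := by
    rw [Finset.mul_sum]
    apply Finset.sum_congr rfl; intro k _
    rw [Finset.mul_sum]
    apply Finset.sum_congr rfl; intro j _
    ring
  rw [h]
  ring

lemma cons_eq_update {m q : ℕ} (v : Fin (q + 1) → Fin m) (t : Fin (q + 1))
    (k : Fin m) :
    (Function.update v t k) ∘ ⇑(t.cycleRange)⁻¹ = Fin.cons k (v ∘ t.succAbove) := by
  funext x
  induction x using Fin.cases with
  | zero =>
      simp only [Equiv.Perm.inv_def, Function.comp_apply, Fin.cons_zero]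
      rw [Fin.cycleRange_symm_zero, Function.update_self]
  | succ j =>
      simp only [Equiv.Perm.inv_def, Function.comp_apply, Fin.cons_succ]
      rw [Fin.cycleRange_symm_succ, Function.update_of_ne (Fin.succAbove_ne t j)]

lemma alt_cons {m q : ℕ} (a : WeylSecForm m (q + 1)) (halt : IsAltSecForm a)
    (v : Fin (q + 1) → Fin m) (t : Fin (q + 1)) (k : Fin m) (n : ℕ) :
    a (Fin.cons k (v ∘ t.succAbove)) n
      = ((-1:ℝ)^(t:ℕ)) • a (Function.update v t k) n := by
  have h := halt (t.cycleRange)⁻¹ (Function.update v t k)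
  rw [cons_eq_update] at h
  have hn := congrFun h n
  rw [hn, Pi.smul_apply]
  have hsign : (Equiv.Perm.sign (t.cycleRange)⁻¹ : ℤ) = (-1)^(t:ℕ) := by
    simp [Fin.sign_cycleRange]
  rw [hsign]
  rw [show ((-1:ℝ)^(t:ℕ)) = ((((-1)^(t:ℕ) : ℤ)) : ℝ) by push_cast; ring]
  rw [Int.cast_smul_eq_zsmul]

lemma baseP_sum {m : ℕ} {ι : Type*} (s : Finset ι) (f : ι → MvPolynomial (Fin m) ℝ) :
    baseP (∑ x ∈ s, f x) = ∑ x ∈ s, baseP (f x) := by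
  unfold baseP; exact map_sum _ _ _

lemma baseP_mul {m : ℕ} (f g : MvPolynomial (Fin m) ℝ) :
    baseP (f * g) = baseP f * baseP g := by
  unfold baseP; exact map_mul _ _ _

lemma baseP_add {m : ℕ} (f g : MvPolynomial (Fin m) ℝ) :
    baseP (f + g) = baseP f + baseP g := by
  unfold baseP; exact map_add _ _ _

end Aux

/-- the Cartan-type formula on the Weyl bundle:
`∂ ∘ i(X) + i(X) ∘ ∂ = L_X − (∇_i X)^j yⁱ ∂/∂yʲ`, where
`(∇_i X)^j = ∂_i X^j + Γ^j_{ik} X^k`. -/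
theorem weyl_cartan_formula
    {m : ℕ} (Λ ω : Fin m → Fin m → ℝ)
    (Γ : Fin m → Fin m → Fin m → MvPolynomial (Fin m) ℝ)
    (hΛskew : ∀ i j, Λ i j = - Λ j i)
    (hωskew : ∀ i j, ω i j = - ω j i)
    (hωΛ : ∀ i k, ∑ j : Fin m, ω j k * Λ i j = if i = k then 1 else 0)
    (hΓsym : ∀ k r j, Γ k r j = Γ k j r)
    (hsymp : ∀ r i j,
      ∑ k : Fin m, ω k i • Γ k r j = ∑ k : Fin m, ω k j • Γ k r i)
    (X0 : Fin m → MvPolynomial (Fin m) ℝ)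
    (q : ℕ) (a : WeylSecForm m (q + 1)) (halt : IsAltSecForm a) :
    ∀ (v : Fin (q + 1) → Fin m) (n : ℕ),
      covD Λ ω Γ (contractX X0 a) v n + contractX X0 (covD Λ ω Γ a) v n
        = lieDer X0 a v n
          - ∑ i : Fin m, ∑ j : Fin m,
              baseP (pderiv i (X0 j) + ∑ k : Fin m, Γ j i k * X0 k)
                * yVar i * pderiv (Sum.inr j) (a v n) := by
  intro v n
  have hL1 : covD Λ ω Γ (contractX X0 a) v n
      = (∑ t : Fin (q + 1), ∑ k : Fin m,
          baseP (pderiv (v t) (X0 k)) * a (Function.update v t k) n)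
        + ∑ t : Fin (q + 1), ((-1:ℝ)^(t:ℕ)) • ∑ k : Fin m,
            baseP (X0 k) * nabla Γ (v t) (a (Fin.cons k (v ∘ t.succAbove)) n) := by
    rw [covD_eq Λ ω Γ hΛskew hωskew hωΛ hsymp (contractX X0 a) v n,
      ← Finset.sum_add_distrib]
    apply Finset.sum_congr rfl; intro t _
    show ((-1:ℝ)^(t:ℕ)) • nabla Γ (v t)
        (∑ k : Fin m, baseP (X0 k) * a (Fin.cons k (v ∘ t.succAbove)) n) = _
    rw [nabla_sum,
      Finset.sum_congr rfl (fun k _ => nabla_mul_base Γ (v t) (X0 k)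
        (a (Fin.cons k (v ∘ t.succAbove)) n)),
      Finset.sum_add_distrib, smul_add]
    congr 1
    rw [Finset.smul_sum]
    apply Finset.sum_congr rfl; intro k _
    rw [alt_cons a halt v t k n, mul_smul_comm, smul_smul, ← pow_add,
      Even.neg_one_pow ⟨(t:ℕ), rfl⟩, one_smul]
  have hL2 : contractX X0 (covD Λ ω Γ a) v n
      = (∑ k : Fin m, baseP (X0 k) * nabla Γ k (a v n))
        - ∑ t : Fin (q + 1), ((-1:ℝ)^(t:ℕ)) • ∑ k : Fin m,
            baseP (X0 k) * nabla Γ (v t) (a (Fin.cons k (v ∘ t.succAbove)) n) := by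
    have hc : ∀ k : Fin m, covD Λ ω Γ a (Fin.cons k v) n
        = nabla Γ k (a v n) + ∑ j : Fin (q + 1), ((-1:ℝ)^((j:ℕ)+1)) •
            nabla Γ (v j) (a (Fin.cons k (v ∘ j.succAbove)) n) := by
      intro k
      rw [covD_eq Λ ω Γ hΛskew hωskew hωΛ hsymp a (Fin.cons k v) n,
        Fin.sum_univ_succ]
      refine congrArg₂ (· + ·) ?_ ?_
      · have h0 : (Fin.cons k v : Fin (q + 2) → Fin m) ∘ (Fin.succAbove 0) = v := by
          funext x; simp [Fin.succAbove_zero]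
        rw [h0]
        simp
      · apply Finset.sum_congr rfl; intro j _
        have hsA : (Fin.cons k v : Fin (q + 2) → Fin m) ∘ (Fin.succAbove j.succ)
            = Fin.cons k (v ∘ j.succAbove) := by
          funext x
          induction x using Fin.cases with
          | zero => simp
          | succ i => simp [Fin.succ_succAbove_succ]
        rw [hsA]
        simp [Fin.cons_succ]
    show (∑ k : Fin m, baseP (X0 k) * covD Λ ω Γ a (Fin.cons k v) n) = _
    rw [Finset.sum_congr rfl (fun k _ => by rw [hc k])]
    simp only [mul_add, Finset.sum_add_distrib]
    rw [sub_eq_add_neg]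
    congr 1
    simp only [Finset.mul_sum]
    rw [Finset.sum_comm, ← Finset.sum_neg_distrib]
    apply Finset.sum_congr rfl; intro j _
    rw [Finset.smul_sum, ← Finset.sum_neg_distrib]
    apply Finset.sum_congr rfl; intro k _
    rw [pow_succ, mul_neg_one, neg_smul, mul_neg, mul_smul_comm]
  have hC : (∑ k : Fin m, baseP (X0 k) * nabla Γ k (a v n))
      = (∑ k : Fin m, baseP (X0 k) * pderiv (Sum.inl k) (a v n))
        - ∑ i : Fin m, ∑ j : Fin m,
            baseP (∑ k : Fin m, Γ j i k * X0 k) * yVar i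
              * pderiv (Sum.inr j) (a v n) := by
    unfold nabla
    simp only [mul_sub]
    rw [Finset.sum_sub_distrib]
    congr 1
    calc (∑ s : Fin m, baseP (X0 s) * ∑ p : Fin m, ∑ j : Fin m,
            baseP (Γ p s j) * yVar j * pderiv (Sum.inr p) (a v n))
        = ∑ s : Fin m, ∑ p : Fin m, ∑ j : Fin m,
            baseP (X0 s) * (baseP (Γ p s j) * yVar j
              * pderiv (Sum.inr p) (a v n)) := by
          simp only [Finset.mul_sum]
      _ = ∑ s : Fin m, ∑ j : Fin m, ∑ p : Fin m,
            baseP (X0 s) * (baseP (Γ p s j) * yVar j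
              * pderiv (Sum.inr p) (a v n)) :=
          Finset.sum_congr rfl (fun _ _ => Finset.sum_comm)
      _ = ∑ j : Fin m, ∑ s : Fin m, ∑ p : Fin m,
            baseP (X0 s) * (baseP (Γ p s j) * yVar j
              * pderiv (Sum.inr p) (a v n)) := Finset.sum_comm
      _ = ∑ j : Fin m, ∑ p : Fin m, ∑ s : Fin m,
            baseP (X0 s) * (baseP (Γ p s j) * yVar j
              * pderiv (Sum.inr p) (a v n)) :=
          Finset.sum_congr rfl (fun _ _ => Finset.sum_comm)
      _ = ∑ i : Fin m, ∑ j : Fin m,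
            baseP (∑ k : Fin m, Γ j i k * X0 k) * yVar i
              * pderiv (Sum.inr j) (a v n) := by
          apply Finset.sum_congr rfl; intro i _
          apply Finset.sum_congr rfl; intro j _
          rw [baseP_sum, Finset.sum_mul, Finset.sum_mul]
          apply Finset.sum_congr rfl; intro k _
          rw [baseP_mul, hΓsym j i k]
          ring
  have hsplit : (∑ i : Fin m, ∑ j : Fin m,
        baseP (pderiv i (X0 j) + ∑ k : Fin m, Γ j i k * X0 k)
          * yVar i * pderiv (Sum.inr j) (a v n))
      = (∑ i : Fin m, ∑ j : Fin m,
          baseP (pderiv i (X0 j)) * yVar i * pderiv (Sum.inr j) (a v n))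
        + ∑ i : Fin m, ∑ j : Fin m,
            baseP (∑ k : Fin m, Γ j i k * X0 k) * yVar i
              * pderiv (Sum.inr j) (a v n) := by
    rw [← Finset.sum_add_distrib]
    apply Finset.sum_congr rfl; intro i _
    rw [← Finset.sum_add_distrib]
    apply Finset.sum_congr rfl; intro j _
    rw [baseP_add, add_mul, add_mul]
  rw [hL1, hL2, hC]
  show _ = ((∑ k : Fin m, baseP (X0 k) * pderiv (Sum.inl k) (a v n))
      + (∑ i : Fin m, ∑ j : Fin m,
          baseP (pderiv i (X0 j)) * yVar i * pderiv (Sum.inr j) (a v n))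
      + ∑ t : Fin (q + 1), ∑ k : Fin m,
          baseP (pderiv (v t) (X0 k)) * a (Function.update v t k) n) - _
  rw [hsplit]
  ring
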